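/- Let G be a graph, C a chordless cycle in G of length at least 5, and H a subgraph of G vertex-disjoint from C such that the family containing C among k−1 disjoint cycles is minimal. Then every vertex v ∈ V(H) has at most one neighbor on C, so the number of edges between H and C is at most |V(H)|. -/

import Mathlib

/-- A family of `k` pairwise vertex-disjoint cycles in `G`. -/
def CycleFamily {V : Type*} (G : SimpleGraph V) (k : ℕ)
    (f : Fin k → Σ v : V, G.Walk v v) : Prop :=
  (∀ i, (f i).2.IsCycle) ∧
  ∀ i j, i ≠ j → ∀ v : V, v ∈ (f i).2.support → v ∉ (f j).2.support

/-- The total number of vertices covered by a family of cycles. -/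
def famCard {V : Type*} [DecidableEq V] {G : SimpleGraph V} {k : ℕ}
    (f : Fin k → Σ v : V, G.Walk v v) : ℕ :=
  (Finset.univ.biUnion fun i : Fin k => (f i).2.support.toFinset).card

set_option linter.unusedSectionVars false
set_option linter.unusedVariables false

open SimpleGraph Walk

section Aux

variable {V : Type*} [DecidableEq V] {G : SimpleGraph V}

lemma mem_support_rotate_iff {u u₁ w : V} (c : G.Walk u u) (h : u₁ ∈ c.support) :
    w ∈ (c.rotate u₁ h).support ↔ w ∈ c.support := by
  conv_rhs => rw [← c.take_spec h]
  simp only [Walk.rotate, Walk.mem_support_append_iff]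
  tauto

lemma arcs_isPath {u₁ u₂ : V} {c : G.Walk u₁ u₁} (hc : c.IsCycle)
    (h : u₂ ∈ c.support) (hne : u₂ ≠ u₁) :
    (c.takeUntil u₂ h).IsPath ∧ (c.dropUntil u₂ h).IsPath := by
  have hspec := c.take_spec h
  set p := c.takeUntil u₂ h with hp
  set q := c.dropUntil u₂ h with hq
  have htail : c.support.tail = p.support.tail ++ q.support.tail := by
    rw [← hspec, Walk.tail_support_append]
  have hnd : (p.support.tail ++ q.support.tail).Nodup := htail ▸ hc.support_nodup
  rw [List.nodup_append'] at hnd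
  obtain ⟨hnp, hnq, hdisj⟩ := hnd
  have hu1 : u₁ ∈ q.support.tail := Walk.end_mem_tail_support_of_ne hne q
  have hu2 : u₂ ∈ p.support.tail := Walk.end_mem_tail_support_of_ne (Ne.symm hne) p
  constructor
  · rw [Walk.isPath_def, p.support_eq_cons, List.nodup_cons]
    exact ⟨fun hu => hdisj hu hu1, hnp⟩
  · rw [Walk.isPath_def, q.support_eq_cons, List.nodup_cons]
    exact ⟨fun hu => hdisj hu2 hu, hnq⟩

/-- A cycle covers at least `length` vertices. -/
lemma cycle_length_le_card {u : V} [DecidableEq V] {c : G.Walk u u} (hc : c.IsCycle) :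
    c.length ≤ c.support.toFinset.card := by
  have h1 : c.support.tail.toFinset.card = c.length := by
    rw [List.toFinset_card_of_nodup hc.support_nodup]
    have h2 := c.length_support
    have h3 := List.length_tail (l := c.support)
    omega
  calc c.length = c.support.tail.toFinset.card := h1.symm
    _ ≤ c.support.toFinset.card :=
        Finset.card_le_card (fun v hv => by
          simp only [List.mem_toFinset] at *
          exact List.tail_subset _ hv)

end Aux

section Replace

variable {V : Type*} [Fintype V] [DecidableEq V] {G : SimpleGraph V}

/-- Replacing the long cycle by the short one through `x` contradicts minimality. -/
lemma replace_contra {k : ℕ} (f : Fin k → Σ v : V, G.Walk v v)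
    (hf : CycleFamily G k f)
    (hmin : ∀ g : Fin k → Σ v : V, G.Walk v v, CycleFamily G k g → famCard f ≤ famCard g)
    (i₀ : Fin k) {x : V} (hx : ∀ i, x ∉ (f i).2.support)
    {a b : V} (r : G.Walk a b) (hr : r.IsPath)
    (hrsub : ∀ v ∈ r.support, v ∈ (f i₀).2.support)
    (hxa : G.Adj x a) (hxb : G.Adj x b) (hab : a ≠ b)
    (hlt : r.length + 2 < (f i₀).2.length) : False := by
  have hxC : x ∉ (f i₀).2.support := hx i₀
  have hxr : x ∉ r.support := fun hxs => hxC (hrsub x hxs)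
  set P : G.Walk a x := r.append (Walk.cons hxb.symm Walk.nil) with hP
  set D : G.Walk x x := Walk.cons hxa P with hD
  have hPsupp : P.support = r.support ++ [x] := by
    rw [hP, Walk.support_append]; simp
  have hPpath : P.IsPath := by
    rw [Walk.isPath_def, hPsupp, List.nodup_append']
    exact ⟨hr.support_nodup, List.nodup_singleton x, by
      intro v hv hv'
      simp only [List.mem_singleton] at hv'
      subst hv'
      exact hxr hv⟩
  have hbC : b ∈ (f i₀).2.support := hrsub b r.end_mem_support
  have hDcycle : D.IsCycle := by
    rw [hD, Walk.cons_isCycle_iff]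
    refine ⟨hPpath, ?_⟩
    intro he
    rw [hP, Walk.edges_append] at he
    simp only [Walk.edges_cons, Walk.edges_nil, List.mem_append, List.mem_singleton] at he
    rcases he with he | he
    · exact hxr (Walk.fst_mem_support_of_mem_edges r he)
    · rw [Sym2.eq_iff] at he
      rcases he with ⟨h1, _⟩ | ⟨_, h2⟩
      · exact hxC (h1 ▸ hbC)
      · exact hab h2
  have hDmem : ∀ v ∈ D.support, v = x ∨ v ∈ (f i₀).2.support := by
    intro v hv
    rw [hD, Walk.support_cons, hPsupp] at hv
    rcases List.mem_cons.mp hv with rfl | hv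
    · exact Or.inl rfl
    rcases List.mem_append.mp hv with hv | hv
    · exact Or.inr (hrsub v hv)
    · exact Or.inl (List.mem_singleton.mp hv)
  -- the new family
  set g : Fin k → Σ v : V, G.Walk v v := Function.update f i₀ ⟨x, D⟩ with hg
  have hgi₀ : g i₀ = ⟨x, D⟩ := Function.update_self _ _ _
  have hgne : ∀ i, i ≠ i₀ → g i = f i := fun i hi => Function.update_of_ne hi _ _
  have hgcyc : ∀ i, (g i).2.IsCycle := by
    intro i
    rcases eq_or_ne i i₀ with rfl | hi
    · rw [hgi₀]; exact hDcycle
    · rw [hgne i hi]; exact hf.1 i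
  have hgsupp : ∀ v ∈ D.support, ∀ j, j ≠ i₀ → v ∉ (f j).2.support := by
    intro v hv j hj
    rcases hDmem v hv with rfl | hv'
    · exact hx j
    · exact hf.2 i₀ j (Ne.symm hj) v hv'
  have hgfam : CycleFamily G k g := by
    refine ⟨hgcyc, ?_⟩
    intro i j hij v hvi hvj
    rcases eq_or_ne i i₀ with rfl | hi
    · rw [hgi₀] at hvi
      rw [hgne j (Ne.symm hij)] at hvj
      exact hgsupp v hvi j (Ne.symm hij) hvj
    · rcases eq_or_ne j i₀ with rfl | hj
      · rw [hgi₀] at hvj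
        rw [hgne i hi] at hvi
        exact hgsupp v hvj i hi hvi
      · rw [hgne i hi] at hvi
        rw [hgne j hj] at hvj
        exact hf.2 i j hij v hvi hvj
  -- cardinalities
  have hdisjf : ∀ i ∈ (Finset.univ : Finset (Fin k)), ∀ j ∈ Finset.univ, i ≠ j →
      Disjoint (f i).2.support.toFinset (f j).2.support.toFinset := by
    intro i _ j _ hij
    rw [Finset.disjoint_left]
    intro v hv hv'
    simp only [List.mem_toFinset] at hv hv'
    exact hf.2 i j hij v hv hv'
  have hdisjg : ∀ i ∈ (Finset.univ : Finset (Fin k)), ∀ j ∈ Finset.univ, i ≠ j →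
      Disjoint (g i).2.support.toFinset (g j).2.support.toFinset := by
    intro i _ j _ hij
    rw [Finset.disjoint_left]
    intro v hv hv'
    simp only [List.mem_toFinset] at hv hv'
    exact hgfam.2 i j hij v hv hv'
  have hcf : famCard f = ∑ i, (f i).2.support.toFinset.card := Finset.card_biUnion hdisjf
  have hcg : famCard g = ∑ i, (g i).2.support.toFinset.card := Finset.card_biUnion hdisjg
  have hDcard : D.support.toFinset.card ≤ r.length + 2 := by
    have hsub : D.support.toFinset ⊆ (x :: r.support).toFinset := by
      intro v hv
      simp only [List.mem_toFinset] at hv ⊢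
      rw [hD, Walk.support_cons, hPsupp] at hv
      rcases List.mem_cons.mp hv with rfl | hv
      · exact List.mem_cons_self
      rcases List.mem_append.mp hv with hv | hv
      · exact List.mem_cons_of_mem _ hv
      · rw [List.mem_singleton.mp hv]; exact List.mem_cons_self
    calc D.support.toFinset.card ≤ (x :: r.support).toFinset.card := Finset.card_le_card hsub
      _ ≤ (x :: r.support).length := List.toFinset_card_le _
      _ = r.length + 2 := by simp [Walk.length_support]
  have hi₀lt : (g i₀).2.support.toFinset.card < (f i₀).2.support.toFinset.card := by
    rw [hgi₀]
    calc D.support.toFinset.card ≤ r.length + 2 := hDcard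
      _ < (f i₀).2.length := hlt
      _ ≤ (f i₀).2.support.toFinset.card := cycle_length_le_card (hf.1 i₀)
  have hlt' : famCard g < famCard f := by
    rw [hcf, hcg]
    apply Finset.sum_lt_sum
    · intro i _
      rcases eq_or_ne i i₀ with rfl | hi
      · exact hi₀lt.le
      · rw [hgne i hi]
    · exact ⟨i₀, Finset.mem_univ _, hi₀lt⟩
  exact absurd (hmin g hgfam) (not_le.mpr hlt')

end Replace

/-- Consequence of Lemma 1 used in Case 2: if `C` is a chordless cycle of length at
least 5 in a minimal family of disjoint cycles and `H` is the set of vertices outside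
all the cycles, then every vertex of `H` has at most one neighbor on `C`, and hence
`e(H, C) ≤ |H|`. -/
theorem long_cycle_few_edges {V : Type*} [Fintype V] [DecidableEq V]
    (G : SimpleGraph V) [DecidableRel G.Adj]
    (k : ℕ) (f : Fin k → Σ v : V, G.Walk v v)
    (hf : CycleFamily G k f)
    (hmin : ∀ g : Fin k → Σ v : V, G.Walk v v, CycleFamily G k g → famCard f ≤ famCard g)
    (i₀ : Fin k) (hlen : 5 ≤ (f i₀).2.length)
    (hchordless : ∀ u₁ u₂ : V, u₁ ∈ (f i₀).2.support → u₂ ∈ (f i₀).2.support →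
      G.Adj u₁ u₂ → (f i₀).2.toSubgraph.Adj u₁ u₂) :
    (∀ x : V, (∀ i, x ∉ (f i).2.support) →
      ((f i₀).2.support.toFinset.filter (G.Adj x)).card ≤ 1) ∧
    ∑ x ∈ Finset.univ.filter (fun x : V => ∀ i, x ∉ (f i).2.support),
        ((f i₀).2.support.toFinset.filter (G.Adj x)).card ≤
      (Finset.univ.filter (fun x : V => ∀ i, x ∉ (f i).2.support)).card := by
  have key : ∀ x : V, (∀ i, x ∉ (f i).2.support) →
      ((f i₀).2.support.toFinset.filter (G.Adj x)).card ≤ 1 := by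
    intro x hx
    by_contra hcard
    push_neg at hcard
    obtain ⟨u₁, hu₁, u₂, hu₂, hne⟩ := Finset.one_lt_card.mp hcard
    simp only [Finset.mem_filter, List.mem_toFinset] at hu₁ hu₂
    obtain ⟨hu₁C, hxu₁⟩ := hu₁
    obtain ⟨hu₂C, hxu₂⟩ := hu₂
    -- rotate the cycle to start at u₁
    set c := (f i₀).2 with hc
    set c' := c.rotate u₁ hu₁C with hc'
    have hc'cyc : c'.IsCycle := (hf.1 i₀).rotate hu₁C
    have hmemiff : ∀ w, w ∈ c'.support ↔ w ∈ c.support := fun w =>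
      mem_support_rotate_iff c hu₁C
    have hu₂c' : u₂ ∈ c'.support := (hmemiff u₂).mpr hu₂C
    set p := c'.takeUntil u₂ hu₂c' with hpdef
    set q := c'.dropUntil u₂ hu₂c' with hqdef
    obtain ⟨hpPath, hqPath⟩ := arcs_isPath hc'cyc hu₂c' (Ne.symm hne)
    have hlensum : p.length + q.length = c'.length := by
      conv_rhs => rw [← c'.take_spec hu₂c']
      rw [Walk.length_append]
    have hc'len : c'.length = c.length := by
      rw [hc', Walk.rotate]
      rw [Walk.length_append]
      conv_rhs => rw [← c.take_spec hu₁C]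
      rw [Walk.length_append]
      omega
    have hpsub : ∀ v ∈ p.support, v ∈ c.support := fun v hv =>
      (hmemiff v).mp (Walk.support_takeUntil_subset c' hu₂c' hv)
    have hqsub : ∀ v ∈ q.support, v ∈ c.support := fun v hv =>
      (hmemiff v).mp (Walk.support_dropUntil_subset c' hu₂c' hv)
    have hclen : c.length = (f i₀).2.length := rfl
    rcases le_or_gt 3 q.length with h3 | h3
    · exact replace_contra f hf hmin i₀ hx p hpPath hpsub hxu₁ hxu₂ hne (by omega)
    · exact replace_contra f hf hmin i₀ hx q hqPath hqsub hxu₂ hxu₁ (Ne.symm hne) (by omega)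
  refine ⟨key, ?_⟩
  calc ∑ x ∈ Finset.univ.filter (fun x : V => ∀ i, x ∉ (f i).2.support),
        ((f i₀).2.support.toFinset.filter (G.Adj x)).card
      ≤ ∑ _x ∈ Finset.univ.filter (fun x : V => ∀ i, x ∉ (f i).2.support), 1 :=
        Finset.sum_le_sum (fun x hx => key x (Finset.mem_filter.mp hx).2)
    _ = (Finset.univ.filter (fun x : V => ∀ i, x ∉ (f i).2.support)).card := by
        simp
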